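/- Let Q be a compact metric space, K ⊆ Q compact, c > 0, and suppose p : C(Q,ℝ) → ℝ satisfies: p(f+g) ≤ p(f)+p(g), p(kf) = k·p(f) for k ≥ 0, p(1) = 1, p(f) ≤ ‖f‖_∞, and p(g) = 0 whenever g ≤ 0. Then there exists a Borel probability measure μ on Q such that ∫ f dμ ≤ p(f) for all f ∈ C(Q,ℝ). Moreover if p(f) = 0 for every continuous 0 ≤ f ≤ 1 vanishing on K, then μ(K) = 1. -/

import Mathlib

open MeasureTheory

open MeasureTheory Set TopologicalSpace
open scoped ENNReal NNReal

noncomputable section FrostmanAux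

/-- Real lemma: the "staircase" decomposition sums to a truncation. -/
lemma frostman_sum_min_max (a ε : ℝ) (ha : 0 ≤ a) (hε : 0 ≤ ε) :
    ∀ n : ℕ, ∑ i ∈ Finset.range n, min (max (a - i * ε) 0) ε = min a (n * ε)
  | 0 => by simp [min_eq_right ha]
  | (n+1) => by
    rw [Finset.sum_range_succ, frostman_sum_min_max a ε ha hε n]
    push_cast
    rcases le_total a (n * ε) with h | h
    · have hε' : a ≤ (n + 1) * ε := by nlinarith
      rw [min_eq_left h, min_eq_left hε', max_eq_right (by linarith), min_eq_left hε]
      ring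
    · rw [min_eq_right h, max_eq_left (by linarith)]
      rcases le_total (a - n * ε) ε with h2 | h2
      · rw [min_eq_left h2, min_eq_left (by linarith)]
        ring
      · rw [min_eq_right h2, min_eq_right (by linarith)]
        ring

lemma frostman_le_sum_if (a ε : ℝ) (ha : 0 ≤ a) (hε : 0 ≤ ε) :
    ∀ n : ℕ, a ≤ n * ε → a ≤ ∑ i ∈ Finset.range n, (if (i : ℝ) * ε < a then ε else 0)
  | 0, h => by simpa using h
  | (n+1), h => by
    rcases le_or_gt a (n * ε) with h1 | h1
    · refine (frostman_le_sum_if a ε ha hε n h1).trans ?_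
      rw [Finset.sum_range_succ]
      have : (0:ℝ) ≤ if (n:ℝ) * ε < a then ε else 0 := by split <;> simp [hε]
      linarith
    · have hall : ∀ i ∈ Finset.range (n+1), (if (i : ℝ) * ε < a then ε else 0) = ε := by
        intro i hi
        have hi' : (i : ℝ) ≤ n := by exact_mod_cast Nat.lt_succ_iff.1 (Finset.mem_range.1 hi)
        rw [if_pos]
        calc (i:ℝ) * ε ≤ n * ε := by nlinarith
          _ < a := h1
      rw [Finset.sum_congr rfl hall, Finset.sum_const, Finset.card_range, nsmul_eq_mul]
      push_cast at h ⊢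
      linarith

variable {Q : Type*} [MetricSpace Q] [CompactSpace Q]

/-- Test functions for the Riesz content of `K`. -/
def rieszT (K : Set Q) : Set C(Q, ℝ) := {f | (∀ x, 0 ≤ f x) ∧ ∀ x ∈ K, 1 ≤ f x}

lemma one_mem_rieszT (K : Set Q) : (1 : C(Q, ℝ)) ∈ rieszT K :=
  ⟨fun x => by simp, fun x _ => by simp⟩

variable (Λ : C(Q, ℝ) →ₗ[ℝ] ℝ)

/-- The (real-valued) Riesz content. -/
def rcr (K : Set Q) : ℝ := sInf (Λ '' rieszT K)

variable (hpos : ∀ f : C(Q, ℝ), (∀ x, 0 ≤ f x) → 0 ≤ Λ f)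

include hpos
set_option linter.unusedSectionVars false

lemma rcr_bddBelow (K : Set Q) : BddBelow (Λ '' rieszT K) := by
  refine ⟨0, ?_⟩
  rintro r ⟨f, hf, rfl⟩
  exact hpos f hf.1

lemma rcr_le {K : Set Q} {f : C(Q, ℝ)} (hf : f ∈ rieszT K) : rcr Λ K ≤ Λ f :=
  csInf_le (rcr_bddBelow Λ hpos K) ⟨f, hf, rfl⟩

lemma le_rcr {K : Set Q} {a : ℝ} (h : ∀ f ∈ rieszT K, a ≤ Λ f) : a ≤ rcr Λ K := by
  refine le_csInf ⟨Λ 1, 1, one_mem_rieszT K, rfl⟩ ?_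
  rintro r ⟨f, hf, rfl⟩
  exact h f hf

lemma rcr_nonneg (K : Set Q) : 0 ≤ rcr Λ K :=
  le_rcr Λ hpos fun f hf => hpos f hf.1

lemma rcr_mono {K₁ K₂ : Set Q} (h : K₁ ⊆ K₂) : rcr Λ K₁ ≤ rcr Λ K₂ :=
  le_rcr Λ hpos fun f hf => rcr_le Λ hpos ⟨hf.1, fun x hx => hf.2 x (h hx)⟩

lemma rcr_union_le (K₁ K₂ : Set Q) : rcr Λ (K₁ ∪ K₂) ≤ rcr Λ K₁ + rcr Λ K₂ := by
  refine le_of_forall_pos_le_add fun ε hε => ?_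
  have hne1 : (Λ '' rieszT K₁).Nonempty := ⟨Λ 1, 1, one_mem_rieszT K₁, rfl⟩
  have hne2 : (Λ '' rieszT K₂).Nonempty := ⟨Λ 1, 1, one_mem_rieszT K₂, rfl⟩
  obtain ⟨r₁, ⟨f₁, hf₁, rfl⟩, hr₁⟩ := exists_lt_of_csInf_lt hne1
    (lt_add_of_pos_right (rcr Λ K₁) (half_pos hε))
  obtain ⟨r₂, ⟨f₂, hf₂, rfl⟩, hr₂⟩ := exists_lt_of_csInf_lt hne2
    (lt_add_of_pos_right (rcr Λ K₂) (half_pos hε))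
  have hmem : f₁ + f₂ ∈ rieszT (K₁ ∪ K₂) := by
    constructor
    · intro x
      have := hf₁.1 x; have := hf₂.1 x
      simp only [ContinuousMap.add_apply]; linarith
    · rintro x (hx | hx)
      · have := hf₁.2 x hx; have := hf₂.1 x
        simp only [ContinuousMap.add_apply]; linarith
      · have := hf₂.2 x hx; have := hf₁.1 x
        simp only [ContinuousMap.add_apply]; linarith
  have := rcr_le Λ hpos hmem
  rw [map_add] at this
  linarith

lemma add_rcr_le_union {K₁ K₂ : Set Q} (hK₁ : IsClosed K₁) (hK₂ : IsClosed K₂)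
    (hd : Disjoint K₁ K₂) : rcr Λ K₁ + rcr Λ K₂ ≤ rcr Λ (K₁ ∪ K₂) := by
  refine le_rcr Λ hpos fun f hf => ?_
  obtain ⟨g, hg0, hg1, hg01⟩ := exists_continuous_zero_one_of_isClosed hK₂ hK₁ hd.symm
  have h1 : f * g ∈ rieszT K₁ := by
    constructor
    · intro x
      exact mul_nonneg (hf.1 x) (hg01 x).1
    · intro x hx
      have hgx : g x = 1 := hg1 hx
      have := hf.2 x (Or.inl hx)
      simp only [ContinuousMap.mul_apply, hgx, mul_one]
      exact this
  have h2 : f * (1 - g) ∈ rieszT K₂ := by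
    constructor
    · intro x
      have := (hg01 x).2
      simp only [ContinuousMap.mul_apply, ContinuousMap.sub_apply, ContinuousMap.one_apply]
      exact mul_nonneg (hf.1 x) (by linarith)
    · intro x hx
      have hgx : g x = 0 := hg0 hx
      have := hf.2 x (Or.inr hx)
      simp only [ContinuousMap.mul_apply, ContinuousMap.sub_apply, ContinuousMap.one_apply, hgx]
      linarith
  have hsum : Λ (f * g) + Λ (f * (1 - g)) = Λ f := by
    rw [← map_add]
    congr 1
    ext x
    simp only [ContinuousMap.add_apply, ContinuousMap.mul_apply, ContinuousMap.sub_apply,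
      ContinuousMap.one_apply]
    ring
  have := rcr_le Λ hpos h1
  have := rcr_le Λ hpos h2
  linarith

/-- The Riesz content as a `Content`. -/
def rieszCont : Content Q where
  toFun K := (rcr Λ K).toNNReal
  mono' K₁ K₂ h := Real.toNNReal_mono (rcr_mono Λ hpos h)
  sup_disjoint' K₁ K₂ hd h₁ h₂ := by
    have e : rcr Λ ((K₁ ⊔ K₂ : Compacts Q) : Set Q) = rcr Λ K₁ + rcr Λ K₂ := by
      rw [Compacts.coe_sup]
      exact le_antisymm (rcr_union_le Λ hpos K₁ K₂) (add_rcr_le_union Λ hpos h₁ h₂ hd)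
    show (rcr Λ ((K₁ ⊔ K₂ : Compacts Q) : Set Q)).toNNReal = _
    rw [e, Real.toNNReal_add (rcr_nonneg Λ hpos _) (rcr_nonneg Λ hpos _)]
  sup_le' K₁ K₂ := by
    show (rcr Λ ((K₁ ⊔ K₂ : Compacts Q) : Set Q)).toNNReal ≤ _
    rw [← Real.toNNReal_add (rcr_nonneg Λ hpos _) (rcr_nonneg Λ hpos _)]
    refine Real.toNNReal_mono ?_
    rw [Compacts.coe_sup]
    exact rcr_union_le Λ hpos K₁ K₂

variable [MeasurableSpace Q] [BorelSpace Q]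

lemma riesz_meas_open_le {U : Set Q} (hU : IsOpen U) {f : C(Q, ℝ)} (hf : f ∈ rieszT U) :
    (rieszCont Λ hpos).measure U ≤ ENNReal.ofReal (Λ f) := by
  rw [Content.measure_apply _ hU.measurableSet, Content.outerMeasure_of_isOpen _ U hU]
  refine iSup₂_le fun C hC => ?_
  have h1 : rcr Λ (C : Set Q) ≤ Λ f :=
    rcr_le Λ hpos ⟨hf.1, fun x hx => hf.2 x (hC hx)⟩
  show ((rcr Λ (C : Set Q)).toNNReal : ℝ≥0∞) ≤ ENNReal.ofReal (Λ f)
  rw [ENNReal.ofReal]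
  exact_mod_cast Real.toNNReal_mono h1

lemma riesz_meas_univ (hΛ1 : Λ 1 = 1) : (rieszCont Λ hpos).measure univ = 1 := by
  refine le_antisymm ?_ ?_
  · have := riesz_meas_open_le Λ hpos isOpen_univ (one_mem_rieszT univ)
    rwa [hΛ1, ENNReal.ofReal_one] at this
  · rw [Content.measure_apply _ MeasurableSet.univ,
      Content.outerMeasure_of_isOpen _ univ isOpen_univ]
    have h1 : (1 : ℝ) ≤ rcr Λ univ := by
      refine le_rcr Λ hpos fun f hf => ?_
      have h := hpos (f - 1) fun x => by
        have := hf.2 x (mem_univ x)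
        simp only [ContinuousMap.sub_apply, ContinuousMap.one_apply]
        linarith
      rw [map_sub, hΛ1] at h
      linarith
    have h2 : (1 : ℝ≥0∞) ≤ ((rcr Λ (univ : Set Q)).toNNReal : ℝ≥0∞) := by
      have := Real.toNNReal_mono h1
      rw [Real.toNNReal_one] at this
      exact_mod_cast this
    exact h2.trans (Content.le_innerContent _ ⟨univ, isCompact_univ⟩ _ (subset_univ _))

end FrostmanAux

/-- Functional-analytic core of the dynamical Frostman lemma (Lemma 4.10):
a sublinear functional `p` on `C(Q,ℝ)` dominates integration against some Borel
probability measure `μ`; if moreover `p` kills all `[0,1]`-valued functions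
vanishing on `K`, then `μ(K) = 1`. -/
theorem frostman_functional {Q : Type*} [MetricSpace Q] [CompactSpace Q]
    [MeasurableSpace Q] [BorelSpace Q]
    (K : Set Q) (hK : IsCompact K) (c : ℝ) (hc : 0 < c)
    (p : C(Q, ℝ) → ℝ)
    (hadd : ∀ f g : C(Q, ℝ), p (f + g) ≤ p f + p g)
    (hhom : ∀ (k : ℝ) (f : C(Q, ℝ)), 0 ≤ k → p (k • f) = k * p f)
    (hone : p 1 = 1)
    (hnorm : ∀ f : C(Q, ℝ), p f ≤ ‖f‖)
    (hneg : ∀ g : C(Q, ℝ), (∀ x, g x ≤ 0) → p g = 0) :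
    ∃ μ : Measure Q, IsProbabilityMeasure μ ∧
      (∀ f : C(Q, ℝ), ∫ x, f x ∂μ ≤ p f) ∧
      ((∀ f : C(Q, ℝ), (∀ x, 0 ≤ f x) → (∀ x, f x ≤ 1) →
          (∀ x ∈ K, f x = 0) → p f = 0) → μ K = 1) := by

  -- `Q` is nonempty
  have hp0 : p 0 = 0 := by
    have := hhom 0 0 le_rfl
    simpa using this
  have hQne : Nonempty Q := by
    by_contra h
    rw [not_nonempty_iff] at h
    have h10 : (1 : C(Q, ℝ)) = 0 := by
      ext x
      exact (h.false x).elim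
    rw [h10, hp0] at hone
    norm_num at hone
  have hne : (1 : C(Q, ℝ)) ≠ 0 := by
    intro h
    obtain ⟨x⟩ := hQne
    have := congrArg (fun g : C(Q, ℝ) => g x) h
    simpa using this
  -- Hahn–Banach
  set F := LinearPMap.mkSpanSingleton (K := ℝ) (σ := RingHom.id ℝ) (1 : C(Q, ℝ)) (1 : ℝ) hne with hF
  have hf : ∀ z : F.domain, F z ≤ p z := by
    rintro ⟨z, hz⟩
    rcases Submodule.mem_span_singleton.1 hz with ⟨t, ht⟩
    subst ht
    rw [LinearPMap.mkSpanSingleton'_apply]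
    rcases le_or_gt 0 t with h | h
    · rw [hhom t 1 h, hone, smul_eq_mul, RingHom.id_apply, mul_one]
    · have : p (t • (1 : C(Q, ℝ))) = 0 := by
        refine hneg _ fun x => ?_
        simp only [ContinuousMap.smul_apply, ContinuousMap.one_apply, smul_eq_mul, mul_one]
        exact h.le
      rw [this, smul_eq_mul, mul_one]
      exact h.le
  obtain ⟨Λ, hΛF, hΛle⟩ := exists_extension_of_le_sublinear F p
    (fun k hk f => hhom k f hk.le) hadd hf
  have hΛ1 : Λ 1 = 1 := by
    have := hΛF ⟨(1 : C(Q, ℝ)), Submodule.mem_span_singleton_self _⟩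
    rwa [LinearPMap.mkSpanSingleton_apply] at this
  have hpos : ∀ f : C(Q, ℝ), (∀ x, 0 ≤ f x) → 0 ≤ Λ f := by
    intro f hf0
    have h1 := hΛle (-f)
    have h2 : p (-f) = 0 := hneg _ fun x => by
      simp only [ContinuousMap.neg_apply]
      linarith [hf0 x]
    rw [map_neg, h2] at h1
    linarith
  -- The measure
  set μ := (rieszCont Λ hpos).measure with hμdef
  haveI hprob : IsProbabilityMeasure μ := ⟨riesz_meas_univ Λ hpos hΛ1⟩
  -- Integral bound for nonnegative functions
  have hint : ∀ f : C(Q, ℝ), Integrable (fun x => f x) μ := fun f =>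
    f.continuous.integrable_of_hasCompactSupport (HasCompactSupport.of_compactSpace _)
  have hnonneg_case : ∀ f : C(Q, ℝ), (∀ x, 0 ≤ f x) → ∫ x, f x ∂μ ≤ Λ f := by
    intro f hf0
    refine le_of_forall_pos_le_add fun ε hε => ?_
    set N := ⌈‖f‖ / ε⌉₊ with hN
    set n := N + 1 with hn
    have hNf : ‖f‖ ≤ n * ε := by
      have h1 : ‖f‖ / ε ≤ N := Nat.le_ceil _
      have h2 : ‖f‖ ≤ N * ε := (div_le_iff₀ hε).1 h1
      have : (N : ℝ) * ε ≤ n * ε := by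
        rw [hn]; push_cast; nlinarith
      linarith
    have hfx : ∀ x, f x ≤ n * ε := fun x =>
      le_trans (le_trans (le_abs_self _) (f.norm_coe_le_norm x)) hNf
    set g : ℕ → C(Q, ℝ) := fun i =>
      ((f - ContinuousMap.const Q ((i : ℝ) * ε)) ⊔ 0) ⊓ ContinuousMap.const Q ε with hg
    have hgapp : ∀ i x, g i x = min (max (f x - i * ε) 0) ε := by
      intro i x
      simp [hg, ContinuousMap.inf_apply, ContinuousMap.sup_apply, max_comm, min_comm]
    have hgnn : ∀ i, ∀ x, 0 ≤ g i x := fun i x => by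
      rw [hgapp]; exact le_min (le_max_right _ _) hε.le
    have hsum : ∑ i ∈ Finset.range n, g i = f := by
      ext x
      rw [ContinuousMap.coe_sum, Finset.sum_apply]
      simp only [hgapp]
      rw [frostman_sum_min_max (f x) ε (hf0 x) hε.le n]
      exact min_eq_left (hfx x)
    set S : ℕ → Set Q := fun i => {x | (i : ℝ) * ε < f x} with hS
    have hSopen : ∀ i, IsOpen (S i) := fun i => isOpen_lt continuous_const f.continuous
    have hμS : ∀ i, ε * (μ (S (i + 1))).toReal ≤ Λ (g i) := by
      intro i
      have h0 : 0 ≤ Λ (g i) := hpos _ (hgnn i)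
      have hmem : (ε⁻¹ • g i) ∈ rieszT (S (i + 1)) := by
        constructor
        · intro x
          simp only [ContinuousMap.smul_apply, smul_eq_mul]
          exact mul_nonneg (inv_nonneg.2 hε.le) (hgnn i x)
        · intro x hx
          have hx' : ((i : ℝ) + 1) * ε < f x := by
            have : ((i + 1 : ℕ) : ℝ) * ε < f x := hx
            push_cast at this; linarith
          have hgx : g i x = ε := by
            rw [hgapp, max_eq_left (by nlinarith), min_eq_right (by nlinarith)]
          simp only [ContinuousMap.smul_apply, hgx, smul_eq_mul]
          rw [inv_mul_cancel₀ hε.ne']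
      have hle := riesz_meas_open_le Λ hpos (hSopen (i + 1)) hmem
      rw [_root_.map_smul, smul_eq_mul] at hle
      have htr : (μ (S (i + 1))).toReal ≤ ε⁻¹ * Λ (g i) :=
        ENNReal.toReal_le_of_le_ofReal (mul_nonneg (inv_nonneg.2 hε.le) h0) hle
      calc ε * (μ (S (i + 1))).toReal ≤ ε * (ε⁻¹ * Λ (g i)) :=
            mul_le_mul_of_nonneg_left htr hε.le
        _ = Λ (g i) := by field_simp
    have hind : ∀ i, Integrable (fun x => (S i).indicator (fun _ => ε) x) μ := fun i =>
      (integrable_const ε).indicator (hSopen i).measurableSet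
    have hle1 : ∫ x, f x ∂μ ≤ ∑ i ∈ Finset.range n, ε * (μ (S i)).toReal := by
      have hmono : ∫ x, f x ∂μ ≤
          ∫ x, (∑ i ∈ Finset.range n, (S i).indicator (fun _ => ε) x) ∂μ := by
        refine integral_mono (hint f) (integrable_finset_sum _ fun i _ => hind i) fun x => ?_
        have h := frostman_le_sum_if (f x) ε (hf0 x) hε.le n (hfx x)
        refine h.trans (le_of_eq ?_)
        refine Finset.sum_congr rfl fun i _ => ?_
        rw [Set.indicator_apply]
        simp only [hS, mem_setOf_eq]
      refine hmono.trans (le_of_eq ?_)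
      rw [integral_finset_sum _ fun i _ => hind i]
      refine Finset.sum_congr rfl fun i _ => ?_
      rw [integral_indicator_const ε (hSopen i).measurableSet, smul_eq_mul, mul_comm, measureReal_def]
    have hle2 : ∑ i ∈ Finset.range n, ε * (μ (S i)).toReal ≤
        ε + ∑ i ∈ Finset.range N, Λ (g i) := by
      rw [hn, Finset.sum_range_succ']
      have h0 : ε * (μ (S 0)).toReal ≤ ε := by
        have h1 : μ (S 0) ≤ 1 := prob_le_one
        have h2 : (μ (S 0)).toReal ≤ 1 := by
          have := ENNReal.toReal_mono ENNReal.one_ne_top h1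
          simpa using this
        nlinarith
      have hterm : ∑ i ∈ Finset.range N, ε * (μ (S (i + 1))).toReal ≤
          ∑ i ∈ Finset.range N, Λ (g i) :=
        Finset.sum_le_sum fun i _ => hμS i
      linarith
    have hle3 : ∑ i ∈ Finset.range N, Λ (g i) ≤ Λ f := by
      have heq : ∑ i ∈ Finset.range n, Λ (g i) = Λ f := by
        rw [← map_sum, hsum]
      rw [hn, Finset.sum_range_succ] at heq
      have := hpos (g N) (hgnn N)
      linarith
    linarith
  -- Integral bound in general
  have hgen : ∀ f : C(Q, ℝ), ∫ x, f x ∂μ ≤ Λ f := by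
    intro f
    have hnn : ∀ x, 0 ≤ (f + ContinuousMap.const Q ‖f‖) x := by
      intro x
      have h1 : |f x| ≤ ‖f‖ := by
        have := f.norm_coe_le_norm x
        simpa [Real.norm_eq_abs] using this
      simp only [ContinuousMap.add_apply, ContinuousMap.const_apply]
      have := neg_abs_le (f x)
      linarith
    have h1 := hnonneg_case _ hnn
    have hconst : (ContinuousMap.const Q ‖f‖) = ‖f‖ • (1 : C(Q, ℝ)) := by
      ext x; simp
    have hint2 : ∫ x, (f + ContinuousMap.const Q ‖f‖) x ∂μ = (∫ x, f x ∂μ) + ‖f‖ := by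
      simp only [ContinuousMap.add_apply, ContinuousMap.const_apply]
      rw [integral_add (hint f) (integrable_const _), integral_const]
      simp
    have hΛ2 : Λ (f + ContinuousMap.const Q ‖f‖) = Λ f + ‖f‖ := by
      rw [map_add, hconst, _root_.map_smul, smul_eq_mul, hΛ1, mul_one]
    rw [hint2, hΛ2] at h1
    linarith
  refine ⟨μ, hprob, fun f => (hgen f).trans (hΛle f), ?_⟩
  -- Concentration on K
  intro hvanish
  have hKc : μ Kᶜ = 0 := by
    rw [hμdef, Content.measure_apply _ hK.isClosed.measurableSet.compl,
      Content.outerMeasure_of_isOpen _ _ hK.isClosed.isOpen_compl]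
    refine le_antisymm (iSup₂_le fun C hC => ?_) zero_le
    have hdisj : Disjoint K (C : Set Q) := by
      rw [Set.disjoint_right]
      intro x hx
      exact fun hxK => hC hx hxK
    obtain ⟨h, hh0, hh1, hh01⟩ := exists_continuous_zero_one_of_isClosed
      hK.isClosed C.isCompact.isClosed hdisj
    have hph : p h = 0 :=
      hvanish h (fun x => (hh01 x).1) (fun x => (hh01 x).2) (fun x hx => hh0 hx)
    have hrc : rcr Λ (C : Set Q) ≤ 0 := by
      have hmem : h ∈ rieszT (C : Set Q) := ⟨fun x => (hh01 x).1, fun x hx => (hh1 hx).ge⟩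
      have := rcr_le Λ hpos hmem
      have h2 := hΛle h
      rw [hph] at h2
      linarith
    have : ((rieszCont Λ hpos).toFun C : ℝ≥0∞) = 0 := by
      show (((rcr Λ (C : Set Q)).toNNReal : ℝ≥0) : ℝ≥0∞) = 0
      rw [Real.toNNReal_of_nonpos hrc]
      simp
    exact le_of_eq this
  exact (prob_compl_eq_zero_iff hK.isClosed.measurableSet).1 hKc
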